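/- Let S be a commutative ring, G a finite group acting on S by ring automorphisms, t a maximal ideal of S whose G-orbit {g(t) : g ∈ G} consists of |G| pairwise distinct (hence pairwise comaximal) maximal ideals, and U a module over the skew group ring S ∗ G. If U₁ := Ann_U(t) is nonzero and U = Σ_{g∈G} g·U₁, then the sum is direct and dim U = |G| · dim U₁ whenever S is an algebra over a field and U₁ is finite dimensional. -/

import Mathlib

/-- Let `S` be a commutative algebra over a field `k`, `G` a finite group acting on `S` by
ring automorphisms, `t` a maximal ideal of `S` whose `G`-orbit consists of `|G|` pairwise
distinct maximal ideals, and `U` a module over the skew group ring `S ∗ G` (i.e. an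
`S`-module with a compatible `G`-action).  If `U₁ = Ann_U(t)` is nonzero and
`U = ∑ g, g • U₁`, then the sum is direct and `dim U = |G| * dim U₁` whenever `U₁` is
finite dimensional over `k`. -/
theorem annihilator_sum_direct {k S G U : Type*} [Field k] [CommRing S] [Algebra k S]
    [Group G] [Fintype G] [MulSemiringAction G S]
    [AddCommGroup U] [Module S U] [Module k U] [IsScalarTower k S U]
    [DistribMulAction G U] [SMulCommClass G k U]
    (hcompat : ∀ (g : G) (s : S) (u : U), g • (s • u) = (g • s) • (g • u))
    (t : Ideal S) (ht : t.IsMaximal)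
    (hdistinct : Function.Injective fun g : G => Ideal.map (MulSemiringAction.toRingHom G S g) t)
    (U₁ : Submodule k U) (hU₁ : ∀ u : U, u ∈ U₁ ↔ ∀ s ∈ t, s • u = 0)
    (hne : U₁ ≠ ⊥) [FiniteDimensional k ↥U₁]
    (hsum : ⨆ g : G, U₁.map (DistribMulAction.toLinearMap k U g) = ⊤) :
    iSupIndep (fun g : G => U₁.map (DistribMulAction.toLinearMap k U g)) ∧
      Module.finrank k U = Fintype.card G * Module.finrank k ↥U₁ := by
  classical
  set W : G → Submodule k U := fun g => U₁.map (DistribMulAction.toLinearMap k U g) with hW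
  set T : G → Ideal S := fun g => Ideal.map (MulSemiringAction.toRingHom G S g) t with hT
  have hTmax : ∀ g, (T g).IsMaximal := fun g =>
    (Ideal.isMaximal_map_iff_of_bijective (f := MulSemiringAction.toRingHom G S g) (hf := (MulSemiringAction.toRingEquiv G S g).bijective)).mpr ht
  -- annihilation lemma
  have hann : ∀ g : G, ∀ u ∈ W g, ∀ s ∈ T g, s • u = 0 := by
    intro g u hu s hs
    obtain ⟨v, hv, rfl⟩ := hu
    have : T g ≤ Ideal.torsionOf S U (g • v) := by
      rw [Ideal.map_le_iff_le_comap]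
      intro s' hs'
      simp only [Ideal.mem_comap, Ideal.mem_torsionOf_iff]
      show (g • s') • g • v = 0
      rw [← hcompat, (hU₁ v).mp hv s' hs', smul_zero]
    exact this hs
  have hindep : iSupIndep W := by
    rw [iSupIndep_def]
    intro g
    rw [Submodule.disjoint_def]
    intro u hu1 hu2
    -- comaximality
    have hcop : IsCoprime (T g) (∏ h ∈ Finset.univ.erase g, T h) := by
      rw [IsCoprime.prod_right_iff]
      intro h hh
      exact Ideal.isCoprime_iff_sup_eq.mpr <| (hTmax g).coprime_of_ne (hTmax h)
        (fun e => (Finset.mem_erase.mp hh).1 (hdistinct e.symm))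
    obtain ⟨a, ha, b, hb, hab⟩ := Ideal.isCoprime_iff_exists.mp hcop
    have hbu : b • u = 0 := by
      have key : ∀ h : G, h ≠ g → ∀ u' ∈ W h, b • u' = 0 := by
        intro h hh u' hu'
        exact hann h u' hu' b (Ideal.prod_le_inf.trans (Finset.inf_le (by simp [hh])) hb)
      rw [iSup_subtype'] at hu2
      refine Submodule.iSup_induction _ (motive := fun x => b • x = 0) hu2 ?_ (smul_zero b) ?_
      · rintro ⟨h, hh⟩ x hx
        exact key h hh x hx
      · intro x y hx hy
        rw [smul_add, hx, hy, add_zero]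
    calc u = (1 : S) • u := (one_smul S u).symm
    _ = (a + b) • u := by rw [hab]
    _ = a • u + b • u := add_smul a b u
    _ = 0 := by rw [hann g u hu1 a ha, hbu, add_zero]
  refine ⟨hindep, ?_⟩
  have hWfr : ∀ g, Module.finrank k (W g) = Module.finrank k U₁ := fun g =>
    LinearEquiv.finrank_map_eq (DistribMulAction.toLinearEquiv k U g) U₁
  haveI hWfd : ∀ g, FiniteDimensional k (W g) := by
    intro g
    rw [hW]
    infer_instance
  have hinternal : DirectSum.IsInternal W :=
    (DirectSum.isInternal_submodule_iff_iSupIndep_and_iSup_eq_top W).mpr ⟨hindep, hsum⟩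
  let e : (DirectSum G fun g => ↥(W g)) ≃ₗ[k] U := LinearEquiv.ofBijective (DirectSum.coeLinearMap W) hinternal
  rw [← LinearEquiv.finrank_eq e, Module.finrank_directSum]
  simp [hWfr, Finset.sum_const, Finset.card_univ]
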